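/- arXiv:2112.03347 — 3 statements merged into one kernel-verified Lean document; each statement's English description precedes it below -/
import Mathlib

section
/- Let α : ℝ → ℝ be an extended class K∞ function (continuous, strictly increasing, with α(0) = 0), let T ≥ 0, and let ζ : ℝ → ℝ be differentiable. If ζ'(t) ≥ -α(ζ(t)) for all t ∈ [0, T] and ζ(0) ≥ 0, then ζ(t) ≥ 0 for all t ∈ [0, T]. -/
/-- CBF trajectory safety: if `α` is an extended class K∞ function (continuous, strictly
increasing, `α 0 = 0`) and the differentiable scalar `ζ` satisfies `ζ' t ≥ -α (ζ t)` on
`[0, T]` with `ζ 0 ≥ 0`, then `ζ t ≥ 0` on `[0, T]`. -/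
theorem cbf_scalar_safety
    (α : ℝ → ℝ) (hαc : Continuous α) (hαmono : StrictMono α) (hα0 : α 0 = 0)
    (T : ℝ) (hT : 0 ≤ T) (ζ : ℝ → ℝ) (hζ : Differentiable ℝ ζ)
    (hineq : ∀ t ∈ Set.Icc (0 : ℝ) T, deriv ζ t ≥ -α (ζ t))
    (h0 : ζ 0 ≥ 0) :
    ∀ t ∈ Set.Icc (0 : ℝ) T, ζ t ≥ 0 := by
  intro t₀ ht₀
  by_contra hneg
  push_neg at hneg
  set S : Set ℝ := {t ∈ Set.Icc (0 : ℝ) t₀ | 0 ≤ ζ t} with hS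
  have hSne : S.Nonempty := ⟨0, ⟨le_refl 0, ht₀.1⟩, h0⟩
  have hSbdd : BddAbove S := ⟨t₀, fun x hx => hx.1.2⟩
  have hSclosed : IsClosed S :=
    isClosed_Icc.inter (isClosed_le continuous_const hζ.continuous)
  set s := sSup S with hs
  have hsS : s ∈ S := hSclosed.csSup_mem hSne hSbdd
  have hζs : 0 ≤ ζ s := hsS.2
  have hst₀ : s < t₀ := by
    rcases lt_or_eq_of_le hsS.1.2 with h | h
    · exact h
    · exact absurd (h ▸ hζs) (not_le.mpr hneg)
  have hnegOn : ∀ t ∈ Set.Ioo s t₀, ζ t < 0 := by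
    intro t ht
    by_contra hc
    push_neg at hc
    have : t ∈ S := ⟨⟨hsS.1.1.trans ht.1.le, ht.2.le⟩, hc⟩
    exact absurd (le_csSup hSbdd this) (not_le.mpr ht.1)
  have hmono : StrictMonoOn ζ (Set.Icc s t₀) := by
    apply strictMonoOn_of_deriv_pos (convex_Icc s t₀) hζ.continuous.continuousOn
    intro t ht
    rw [interior_Icc] at ht
    have htT : t ∈ Set.Icc (0 : ℝ) T :=
      ⟨hsS.1.1.trans ht.1.le, ht.2.le.trans ht₀.2⟩
    have hαneg : α (ζ t) < 0 := hα0 ▸ hαmono (hnegOn t ht)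
    linarith [hineq t htT]
  have : ζ s < ζ t₀ :=
    hmono (Set.left_mem_Icc.mpr hst₀.le) (Set.right_mem_Icc.mpr hst₀.le) hst₀
  linarith
end

section
/- Let n, m ∈ ℕ, let f : ℝⁿ → ℝⁿ, g : ℝⁿ → ℝ^{n×m}, and u : ℝⁿ → ℝᵐ, and let h : ℝⁿ → ℝ be continuously differentiable. Let α : ℝ → ℝ be an extended class K∞ function (continuous, strictly increasing, with α(0) = 0). Suppose that for every x ∈ ℝⁿ, ⟨∇h(x), f(x) + g(x)·u(x)⟩ ≥ -α(h(x)). Then for every T ≥ 0 and every differentiable trajectory x : ℝ → ℝⁿ satisfying x'(t) = f(x(t)) + g(x(t))·u(x(t)) for all t ∈ [0, T] and h(x(0)) ≥ 0, it holds that h(x(t)) ≥ 0 for all t ∈ [0, T]; i.e., the 0-superlevel set S = {x : h(x) ≥ 0} is forward invariant under the closed-loop dynamics. -/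
/-- CBF forward invariance (Theorem 1): for the control-affine system
`ẋ = f x + g x * u x` with continuously differentiable barrier `h` and extended class K∞
function `α`, if `⟨∇h x, f x + g x ⬝ u x⟩ ≥ -α (h x)` for all `x`, then along every
closed-loop trajectory starting in `S = {x | h x ≥ 0}`, the state stays in `S`. -/
theorem cbf_forward_invariance
    (n m : ℕ)
    (f : (Fin n → ℝ) → (Fin n → ℝ))
    (g : (Fin n → ℝ) → Matrix (Fin n) (Fin m) ℝ)
    (u : (Fin n → ℝ) → (Fin m → ℝ))
    (h : (Fin n → ℝ) → ℝ) (hh : ContDiff ℝ 1 h)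
    (α : ℝ → ℝ) (hαc : Continuous α) (hαmono : StrictMono α) (hα0 : α 0 = 0)
    (hcbf : ∀ x : Fin n → ℝ, fderiv ℝ h x (f x + (g x).mulVec (u x)) ≥ -α (h x)) :
    ∀ (T : ℝ), 0 ≤ T →
      ∀ x : ℝ → (Fin n → ℝ), Differentiable ℝ x →
        (∀ t ∈ Set.Icc (0 : ℝ) T, deriv x t = f (x t) + (g (x t)).mulVec (u (x t))) →
        h (x 0) ≥ 0 →
        ∀ t ∈ Set.Icc (0 : ℝ) T, x t ∈ {y : Fin n → ℝ | h y ≥ 0} := by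
  intro T hT x hx hode h0 t₀ ht₀
  set y : ℝ → ℝ := fun t => h (x t) with hy_def
  have hycont : Continuous y := (hh.continuous).comp hx.continuous
  have hy_deriv : ∀ t ∈ Set.Icc (0 : ℝ) T,
      HasDerivAt y (fderiv ℝ h (x t) (f (x t) + (g (x t)).mulVec (u (x t)))) t := by
    intro t ht
    have hd : HasDerivAt x (deriv x t) t := (hx t).hasDerivAt
    have := ((hh.differentiable one_ne_zero (x t)).hasFDerivAt).comp_hasDerivAt t hd
    rwa [hode t ht] at this
  simp only [Set.mem_setOf_eq]
  by_contra hneg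
  push_neg at hneg
  set A : Set ℝ := {t | t ∈ Set.Icc 0 t₀ ∧ 0 ≤ y t} with hA_def
  have hAne : A.Nonempty := ⟨0, ⟨le_refl 0, ht₀.1⟩, h0⟩
  have hAbdd : BddAbove A := ⟨t₀, fun t ht => ht.1.2⟩
  have hAclosed : IsClosed A := by
    have : A = Set.Icc 0 t₀ ∩ y ⁻¹' Set.Ici 0 := by
      ext t; simp [hA_def, Set.mem_setOf_eq, and_assoc]
    rw [this]
    exact isClosed_Icc.inter (isClosed_Ici.preimage hycont)
  set s : ℝ := sSup A with hs_def
  have hsA : s ∈ A := hAclosed.csSup_mem hAne hAbdd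
  obtain ⟨⟨hs0, hst₀⟩, hys⟩ := hsA
  have hslt : s < t₀ := by
    rcases lt_or_eq_of_le hst₀ with h' | h'
    · exact h'
    · exact absurd (h' ▸ hys) (not_le.mpr hneg)
  have hyneg : ∀ t ∈ Set.Ioc s t₀, y t < 0 := by
    intro t ht
    by_contra hge
    push_neg at hge
    have : t ∈ A := ⟨⟨hs0.trans ht.1.le, ht.2⟩, hge⟩
    exact absurd (le_csSup hAbdd this) (not_le.mpr ht.1)
  have hmono : StrictMonoOn y (Set.Icc s t₀) := by
    apply strictMonoOn_of_deriv_pos (convex_Icc s t₀) hycont.continuousOn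
    intro t ht
    rw [interior_Icc] at ht
    have htT : t ∈ Set.Icc (0 : ℝ) T :=
      ⟨hs0.trans ht.1.le, ht.2.le.trans ht₀.2⟩
    rw [(hy_deriv t htT).deriv]
    have h1 : -α (y t) > 0 := by
      have : α (y t) < α 0 := hαmono (hyneg t ⟨ht.1, ht.2.le⟩)
      rw [hα0] at this; linarith
    exact lt_of_lt_of_le h1 (hcbf (x t))
  have := hmono ⟨le_rfl, hslt.le⟩ ⟨hslt.le, le_rfl⟩ hslt
  have : (0:ℝ) < y t₀ := lt_of_le_of_lt hys this
  linarith
end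

section
/- Let r ∈ ℕ with r ≥ 1, let T ≥ 0, let p₁, ..., p_r be real numbers, and let ν₀ : ℝ → ℝ be r-times differentiable. Define recursively ν_i(t) = ν_{i-1}'(t) - p_i·ν_{i-1}(t) for i = 1, ..., r. If ν_i(0) ≥ 0 for every i ∈ {0, ..., r-1}, and ν_r(t) ≥ 0 for all t ∈ [0, T], then ν_i(t) ≥ 0 for all i ∈ {0, ..., r-1} and all t ∈ [0, T]; in particular ν₀(t) ≥ 0 for all t ∈ [0, T]. -/
lemma ecbf_single (T : ℝ) (p : ℝ) (f : ℝ → ℝ)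
    (hf : Differentiable ℝ f) (h0 : f 0 ≥ 0)
    (hd : ∀ t ∈ Set.Icc (0 : ℝ) T, deriv f t - p * f t ≥ 0) :
    ∀ t ∈ Set.Icc (0 : ℝ) T, f t ≥ 0 := by
  set g : ℝ → ℝ := fun t => f t * Real.exp (-p * t) with hg
  have hgdiff : Differentiable ℝ g := by
    exact hf.mul (Real.differentiable_exp.comp (differentiable_id.const_mul _))
  have hgderiv : ∀ t, deriv g t = (deriv f t - p * f t) * Real.exp (-p * t) := by
    intro t
    have h1 : HasDerivAt f (deriv f t) t := (hf t).hasDerivAt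
    have h2 : HasDerivAt (fun t : ℝ => Real.exp (-p * t)) (-p * Real.exp (-p * t)) t := by
      have := ((hasDerivAt_id t).const_mul (-p)).exp
      simpa [mul_comm] using this
    have : HasDerivAt (fun t => f t * Real.exp (-p * t)) (deriv f t * Real.exp (-p * t) + f t * (-p * Real.exp (-p * t))) t := h1.mul h2
    rw [hg, this.deriv]
    ring
  have hmono : MonotoneOn g (Set.Icc 0 T) := by
    apply monotoneOn_of_deriv_nonneg (convex_Icc 0 T) hgdiff.continuous.continuousOn
      (hgdiff.differentiableOn)
    intro t ht
    rw [interior_Icc] at ht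
    rw [hgderiv]
    exact mul_nonneg (hd t ⟨le_of_lt ht.1, le_of_lt ht.2⟩) (Real.exp_nonneg _)
  intro t ht
  have h0' : (0 : ℝ) ∈ Set.Icc (0 : ℝ) T := ⟨le_refl _, ht.1.trans ht.2⟩
  have := hmono h0' ht ht.1
  have hg0 : g 0 ≥ 0 := by simpa [hg] using h0
  have hgt : g t ≥ 0 := le_trans hg0 this
  have : f t * Real.exp (-p * t) ≥ 0 := hgt
  nlinarith [Real.exp_pos (-p * t)]

/-- Recursive comparison argument for exponential CBFs: with `ν 0 = ν₀` `r`-times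
differentiable and `ν (i+1) = ν i' - p (i+1) • ν i`, if `ν i 0 ≥ 0` for `i < r` and
`ν r t ≥ 0` on `[0, T]`, then `ν i t ≥ 0` for all `i < r` and `t ∈ [0, T]`;
in particular `ν 0 t ≥ 0`. -/
theorem recursive_ecbf_comparison
    (r : ℕ) (hr : 1 ≤ r) (T : ℝ) (hT : 0 ≤ T) (p : ℕ → ℝ)
    (ν : ℕ → ℝ → ℝ)
    (hdiff : ∀ i < r, Differentiable ℝ (ν i))
    (hrec : ∀ i < r, ∀ t : ℝ, ν (i + 1) t = deriv (ν i) t - p (i + 1) * ν i t)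
    (hinit : ∀ i < r, ν i 0 ≥ 0)
    (hfin : ∀ t ∈ Set.Icc (0 : ℝ) T, ν r t ≥ 0) :
    (∀ i < r, ∀ t ∈ Set.Icc (0 : ℝ) T, ν i t ≥ 0) ∧
    (∀ t ∈ Set.Icc (0 : ℝ) T, ν 0 t ≥ 0) := by
  have key : ∀ d : ℕ, ∀ j : ℕ, j + d = r → ∀ t ∈ Set.Icc (0 : ℝ) T, ν j t ≥ 0 := by
    intro d
    induction d with
    | zero => intro j hj; obtain rfl : j = r := (by omega); exact hfin
    | succ d ih =>
      intro j hj
      have hjr : j < r := by omega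
      have hnext : ∀ t ∈ Set.Icc (0 : ℝ) T, ν (j + 1) t ≥ 0 := ih (j + 1) (by omega)
      apply ecbf_single T (p (j + 1)) (ν j) (hdiff j hjr) (hinit j hjr)
      intro t ht
      have := hnext t ht
      rw [hrec j hjr t] at this
      linarith
  refine ⟨fun i hi t ht => key (r - i) i (by omega) t ht, fun t ht => key r 0 (by omega) t ht⟩
end
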